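/- Let X be a measurable space, let κ and η be Markov kernels from X to X, let γ ∈ [0,1), let r : X → ℝ be a bounded measurable reward with 0 ≤ r ≤ r_max, and let μ₀ be a probability measure on X. Define V_κ(x) := Σ_{n≥0} γ^n E_{P^κ_x}[r(X_n)] and J(κ) := ∫ V_κ dμ₀, and let μ^η_t denote the law of X_t under the η-chain started from μ₀. Let u : X → ℝ be a bounded measurable function with u ≥ 0 such that ∫ V_κ(y) η(x, dy) − ∫ V_κ(y) κ(x, dy) ≤ u(x) for all x ∈ X, and let λ ≥ γ. Define the uncertainty-penalized value J̃(η) := Σ_{t≥0} γ^t ∫ (r − λ·u) dμ^η_t. Then J̃(η) ≤ J(κ). -/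

import Mathlib

open MeasureTheory ProbabilityTheory Filter

/-- The `n`-step transition kernel of a time-homogeneous Markov chain with one-step
kernel `κ`; under the Ionescu–Tulcea trajectory measure `P^κ_x`, the law of `X n` is
`kIter κ n x`. -/
noncomputable def kIter {X : Type*} [MeasurableSpace X] (κ : Kernel X X) : ℕ → Kernel X X
  | 0 => Kernel.id
  | n + 1 => κ ∘ₖ kIter κ n

/-- The discounted value `V_κ(x) = Σ_{n≥0} γ^n E_{P^κ_x}[r(X_n)]`. -/
noncomputable def discVal {X : Type*} [MeasurableSpace X] (κ : Kernel X X) (γ : ℝ)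
    (r : X → ℝ) (x : X) : ℝ :=
  ∑' n : ℕ, γ ^ n * ∫ y, r y ∂(kIter κ n x)

/-- The objective `J(κ) = ∫ V_κ dμ₀`. -/
noncomputable def discJ {X : Type*} [MeasurableSpace X] (κ : Kernel X X) (γ : ℝ)
    (r : X → ℝ) (μ₀ : Measure X) : ℝ :=
  ∫ x, discVal κ γ r x ∂μ₀

/-- The law `μ^η_t` of `X_t` under the `η`-chain started from `μ₀`. -/
noncomputable def marginal {X : Type*} [MeasurableSpace X] (η : Kernel X X)
    (μ₀ : Measure X) (t : ℕ) : Measure X :=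
  μ₀.bind (kIter η t)

section Aux

variable {X : Type*} [MeasurableSpace X]

lemma integrable_of_bound' {α : Type*} [MeasurableSpace α] (μ : Measure α) [IsFiniteMeasure μ]
    {f : α → ℝ} (hf : Measurable f) (C : ℝ) (hC : ∀ x, |f x| ≤ C) : Integrable f μ :=
  ⟨hf.aestronglyMeasurable, HasFiniteIntegral.of_bounded (C := C)
    (Filter.Eventually.of_forall fun x => by simpa [Real.norm_eq_abs] using hC x)⟩

instance kIter.isMarkovKernel (κ : Kernel X X) [IsMarkovKernel κ] (n : ℕ) :
    IsMarkovKernel (kIter κ n) := by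
  induction n with
  | zero => rw [kIter]; infer_instance
  | succ n ih => rw [kIter]; infer_instance

lemma kIter_succ_right (κ : Kernel X X) [IsMarkovKernel κ] (n : ℕ) :
    kIter κ (n + 1) = kIter κ n ∘ₖ κ := by
  induction n with
  | zero => show κ ∘ₖ Kernel.id = Kernel.id ∘ₖ κ; rw [Kernel.comp_id, Kernel.id_comp]
  | succ n ih =>
    show κ ∘ₖ kIter κ (n + 1) = kIter κ (n + 1) ∘ₖ κ
    conv_lhs => rw [ih]
    rw [← Kernel.comp_assoc]
    rfl

lemma bind_eq_map_snd (μ : Measure X) [SFinite μ] (κ : Kernel X X) [IsSFiniteKernel κ] :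
    μ.bind κ = (μ.compProd κ).map Prod.snd := by
  ext s hs
  rw [Measure.map_apply measurable_snd hs, Measure.compProd_apply (measurable_snd hs),
    Measure.bind_apply hs (Kernel.measurable κ).aemeasurable]
  rfl

lemma integral_bind' (μ : Measure X) [IsProbabilityMeasure μ] (κ : Kernel X X) [IsMarkovKernel κ]
    {f : X → ℝ} (hf : Measurable f) (C : ℝ) (hC : ∀ x, |f x| ≤ C) :
    ∫ y, f y ∂(μ.bind κ) = ∫ x, ∫ y, f y ∂(κ x) ∂μ := by
  rw [bind_eq_map_snd, integral_map measurable_snd.aemeasurable hf.aestronglyMeasurable]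
  exact Measure.integral_compProd
    (integrable_of_bound' _ (hf.comp measurable_snd) C (fun z => hC z.2))

instance bind_probability (μ : Measure X) [IsProbabilityMeasure μ] (κ : Kernel X X)
    [IsMarkovKernel κ] : IsProbabilityMeasure (μ.bind κ) := by
  constructor
  rw [Measure.bind_apply MeasurableSet.univ (Kernel.measurable κ).aemeasurable]
  simp

lemma integral_tsum_bound (μ : Measure X) [IsProbabilityMeasure μ] {f : ℕ → X → ℝ}
    (hm : ∀ n, Measurable (f n)) (b : ℕ → ℝ) (hb0 : ∀ n, 0 ≤ b n)
    (hfb : ∀ n x, |f n x| ≤ b n) (hsb : Summable b) :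
    ∫ x, ∑' n, f n x ∂μ = ∑' n, ∫ x, f n x ∂μ := by
  refine integral_tsum (fun n => (hm n).aestronglyMeasurable) ?_
  have h1 : ∀ n, ∫⁻ x, ‖f n x‖₊ ∂μ ≤ ENNReal.ofReal (b n) := by
    intro n
    calc ∫⁻ x, ‖f n x‖₊ ∂μ ≤ ∫⁻ _, ENNReal.ofReal (b n) ∂μ := by
          refine lintegral_mono fun x => ?_
          rw [← enorm_eq_nnnorm, ← ofReal_norm]
          exact ENNReal.ofReal_le_ofReal (by simpa [Real.norm_eq_abs] using hfb n x)
      _ = ENNReal.ofReal (b n) := by simp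
  refine ne_of_lt (lt_of_le_of_lt (ENNReal.tsum_le_tsum h1) ?_)
  rw [← ENNReal.ofReal_tsum_of_nonneg hb0 hsb]
  exact ENNReal.ofReal_lt_top

end Aux

/-- **Conservatism of the uncertainty-penalized MDP** (the paper's Lemma 4, after Yu et
al.): if `u ≥ 0` bounds the one-step value-prediction gap and `λ ≥ γ`, then the
uncertainty-penalized value `J̃(η) = Σ_{t≥0} γ^t ∫ (r − λ u) dμ^η_t` satisfies
`J̃(η) ≤ J(κ)`. -/
theorem stmt9 {X : Type*} [MeasurableSpace X]
    (κ η : Kernel X X) [IsMarkovKernel κ] [IsMarkovKernel η]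
    (γ : ℝ) (hγ0 : 0 ≤ γ) (hγ1 : γ < 1)
    (r : X → ℝ) (hr : Measurable r)
    (rmax : ℝ) (hr0 : ∀ x, 0 ≤ r x) (hrmax : ∀ x, r x ≤ rmax)
    (μ₀ : Measure X) [IsProbabilityMeasure μ₀]
    (u : X → ℝ) (hum : Measurable u) (hub : ∃ C, ∀ x, |u x| ≤ C) (hu0 : ∀ x, 0 ≤ u x)
    (hu : ∀ x, (∫ y, discVal κ γ r y ∂(η x)) - (∫ y, discVal κ γ r y ∂(κ x)) ≤ u x)
    (lam : ℝ) (hlam : γ ≤ lam) :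
    (∑' t : ℕ, γ ^ t * ∫ x, (r x - lam * u x) ∂(marginal η μ₀ t))
      ≤ discJ κ γ r μ₀ := by
  obtain ⟨C, hC⟩ := hub
  have hne : Nonempty X := by
    by_contra h
    have h1 : (μ₀ : Measure X) Set.univ = 1 := measure_univ
    rw [Set.univ_eq_empty_iff.2 (not_nonempty_iff.1 h)] at h1
    simp at h1
  obtain ⟨x₀⟩ := hne
  have hC0 : 0 ≤ C := le_trans (abs_nonneg _) (hC x₀)
  have hrm0 : 0 ≤ rmax := le_trans (hr0 x₀) (hrmax x₀)
  have hlam0 : 0 ≤ lam := le_trans hγ0 hlam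
  have h1γ : 0 < 1 - γ := by linarith
  -- the n-step expected reward
  set rn : ℕ → X → ℝ := fun n x => ∫ y, r y ∂(kIter κ n x) with hrn_def
  have hrabs : ∀ x, |r x| ≤ rmax := fun x => by
    rw [abs_of_nonneg (hr0 x)]; exact hrmax x
  have hrn_meas : ∀ n, Measurable (rn n) := by
    intro n
    exact (MeasureTheory.StronglyMeasurable.integral_kernel_prod_right
      (κ := kIter κ n) (f := fun _ y => r y)
      (hr.comp measurable_snd).stronglyMeasurable).measurable
  have hrn0 : ∀ n x, 0 ≤ rn n x := fun n x => integral_nonneg fun y => hr0 y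
  have hrnle : ∀ n x, rn n x ≤ rmax := by
    intro n x
    calc rn n x ≤ ∫ _, rmax ∂(kIter κ n x) :=
          integral_mono (integrable_of_bound' _ hr rmax hrabs) (integrable_const _)
            fun y => hrmax y
      _ = rmax := by simp
  have hgsum : Summable (fun n : ℕ => γ ^ n) := summable_geometric_of_lt_one hγ0 hγ1
  have hsum : ∀ x, Summable (fun n => γ ^ n * rn n x) := by
    intro x
    refine Summable.of_nonneg_of_le
      (fun n => mul_nonneg (pow_nonneg hγ0 n) (hrn0 n x))
      (fun n => mul_le_mul_of_nonneg_left (hrnle n x) (pow_nonneg hγ0 n))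
      (hgsum.mul_right rmax)
  set V : X → ℝ := discVal κ γ r with hV_def
  have hVx : ∀ x, V x = ∑' n, γ ^ n * rn n x := fun x => rfl
  set M : ℝ := (1 - γ)⁻¹ * rmax with hM_def
  have hM0 : 0 ≤ M := mul_nonneg (inv_nonneg.2 h1γ.le) hrm0
  have hV0 : ∀ x, 0 ≤ V x := fun x =>
    tsum_nonneg fun n => mul_nonneg (pow_nonneg hγ0 n) (hrn0 n x)
  have hVle : ∀ x, V x ≤ M := by
    intro x
    calc V x ≤ ∑' n : ℕ, γ ^ n * rmax :=
          Summable.tsum_le_tsum (fun n => mul_le_mul_of_nonneg_left (hrnle n x) (pow_nonneg hγ0 n))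
            (hsum x) (hgsum.mul_right rmax)
      _ = M := by rw [tsum_mul_right, tsum_geometric_of_lt_one hγ0 hγ1]
  have hVabs : ∀ x, |V x| ≤ M := fun x => abs_le.2 ⟨by linarith [hV0 x], hVle x⟩
  have hVmeas : Measurable V := by
    refine measurable_of_tendsto_metrizable
      (f := fun T x => ∑ n ∈ Finset.range T, γ ^ n * rn n x)
      (fun T => Finset.measurable_sum _ fun n _ => measurable_const.mul (hrn_meas n)) ?_
    rw [tendsto_pi_nhds]
    exact fun x => (hsum x).hasSum.tendsto_sum_nat
  -- kernel-averaged value is measurable and bounded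
  have hPmeas : ∀ (ξ : Kernel X X) [IsSFiniteKernel ξ], Measurable (fun x => ∫ y, V y ∂(ξ x)) := by
    intro ξ _
    exact (MeasureTheory.StronglyMeasurable.integral_kernel_prod_right
      (κ := ξ) (f := fun _ y => V y)
      (hVmeas.comp measurable_snd).stronglyMeasurable).measurable
  have hPabs : ∀ (ξ : Kernel X X) [IsMarkovKernel ξ], ∀ x, |∫ y, V y ∂(ξ x)| ≤ M := by
    intro ξ _ x
    rw [abs_of_nonneg (integral_nonneg fun y => hV0 y)]
    calc (∫ y, V y ∂(ξ x)) ≤ ∫ _, M ∂(ξ x) :=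
          integral_mono (integrable_of_bound' _ hVmeas M hVabs) (integrable_const _)
            fun y => hVle y
      _ = M := by simp
  -- Bellman equation
  have hstep : ∀ n x, rn (n + 1) x = ∫ y, rn n y ∂(κ x) := by
    intro n x
    show ∫ y, r y ∂(kIter κ (n + 1) x) = _
    rw [kIter_succ_right, Kernel.comp_apply]
    exact integral_bind' (κ x) (kIter κ n) hr rmax hrabs
  have hbell : ∀ x, V x = r x + γ * ∫ y, V y ∂(κ x) := by
    intro x
    rw [hVx x, (hsum x).tsum_eq_zero_add]
    congr 1
    · show γ ^ 0 * ∫ y, r y ∂(kIter κ 0 x) = r x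
      rw [pow_zero, one_mul]
      show ∫ y, r y ∂(Kernel.id x) = r x
      rw [Kernel.id_apply]
      exact integral_dirac' r x hr.stronglyMeasurable
    · have hterm : ∀ n : ℕ, γ ^ (n + 1) * rn (n + 1) x
          = γ * ∫ y, γ ^ n * rn n y ∂(κ x) := by
        intro n
        rw [hstep n x, integral_const_mul, pow_succ]
        ring
      calc (∑' n : ℕ, γ ^ (n + 1) * rn (n + 1) x)
          = ∑' n : ℕ, γ * ∫ y, γ ^ n * rn n y ∂(κ x) := by
            exact tsum_congr hterm
        _ = γ * ∑' n : ℕ, ∫ y, γ ^ n * rn n y ∂(κ x) := tsum_mul_left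
        _ = γ * ∫ y, ∑' n : ℕ, γ ^ n * rn n y ∂(κ x) := by
            rw [integral_tsum_bound (κ x) (f := fun n y => γ ^ n * rn n y) (fun n => measurable_const.mul (hrn_meas n))
              (fun n => γ ^ n * rmax)
              (fun n => mul_nonneg (pow_nonneg hγ0 n) hrm0)
              (fun n y => by
                rw [abs_of_nonneg (mul_nonneg (pow_nonneg hγ0 n) (hrn0 n y))]
                exact mul_le_mul_of_nonneg_left (hrnle n y) (pow_nonneg hγ0 n))
              (hgsum.mul_right rmax)]
        _ = γ * ∫ y, V y ∂(κ x) := rfl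
  -- marginal facts
  have hprob : ∀ t, IsProbabilityMeasure (marginal η μ₀ t) := by
    intro t
    exact bind_probability μ₀ (kIter η t)
  have hmarg0 : marginal η μ₀ 0 = μ₀ := by
    show μ₀.bind ⇑(kIter η 0) = μ₀
    rw [show kIter η 0 = Kernel.id from rfl]
    have : ⇑(Kernel.id : Kernel X X) = Measure.dirac := funext fun a => Kernel.id_apply a
    rw [this]
    exact Measure.bind_dirac
  have hmb : ∀ t, marginal η μ₀ (t + 1) = (marginal η μ₀ t).bind η := by
    intro t
    show μ₀.bind ⇑(kIter η (t + 1)) = (μ₀.bind ⇑(kIter η t)).bind ⇑η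
    rw [Measure.bind_bind (Kernel.measurable _).aemeasurable (Kernel.measurable _).aemeasurable]
    congr 1
  -- telescoping
  set a : ℕ → ℝ := fun t => γ ^ t * ∫ x, V x ∂(marginal η μ₀ t) with ha_def
  have ha0 : a 0 = discJ κ γ r μ₀ := by
    rw [ha_def]
    simp only [pow_zero, one_mul, hmarg0]
    rfl
  have haT : ∀ t, 0 ≤ a t := fun t =>
    mul_nonneg (pow_nonneg hγ0 t) (integral_nonneg fun x => hV0 x)
  have key : ∀ t, γ ^ t * (∫ x, (r x - lam * u x) ∂(marginal η μ₀ t)) ≤ a t - a (t + 1) := by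
    intro t
    haveI := hprob t
    have hpe : (∫ x, V x ∂(marginal η μ₀ (t + 1)))
        = ∫ x, ∫ y, V y ∂(η x) ∂(marginal η μ₀ t) := by
      rw [hmb t]
      exact integral_bind' _ η hVmeas M hVabs
    have hsub : a t - a (t + 1)
        = γ ^ t * ∫ x, (V x - γ * ∫ y, V y ∂(η x)) ∂(marginal η μ₀ t) := by
      rw [ha_def]
      simp only [hpe]
      rw [integral_sub (integrable_of_bound' _ hVmeas M hVabs)
        (Integrable.const_mul (integrable_of_bound' _ (hPmeas η) M (hPabs η)) γ),
        integral_const_mul, pow_succ]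
      ring
    rw [hsub]
    refine mul_le_mul_of_nonneg_left ?_ (pow_nonneg hγ0 t)
    refine integral_mono
      (integrable_of_bound' _ (hr.sub (measurable_const.mul hum)) (rmax + lam * C)
        (fun x => by
          have h1 : |lam * u x| ≤ lam * C := by
            rw [abs_mul, abs_of_nonneg hlam0]
            exact mul_le_mul_of_nonneg_left (hC x) hlam0
          calc |r x - lam * u x| ≤ |r x| + |lam * u x| := abs_sub _ _
            _ ≤ rmax + lam * C := add_le_add (hrabs x) h1))
      ((integrable_of_bound' _ hVmeas M hVabs).sub
        (Integrable.const_mul (integrable_of_bound' _ (hPmeas η) M (hPabs η)) γ))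
      ?_
    intro x
    have hb := hbell x
    have h2 : γ * ((∫ y, V y ∂(η x)) - ∫ y, V y ∂(κ x)) ≤ γ * u x :=
      mul_le_mul_of_nonneg_left (hu x) hγ0
    have h3 : γ * u x ≤ lam * u x := mul_le_mul_of_nonneg_right hlam (hu0 x)
    simp only
    nlinarith [h2, h3, hb]
  -- summability of the penalized series
  have hIabs : ∀ t, |∫ x, (r x - lam * u x) ∂(marginal η μ₀ t)| ≤ rmax + lam * C := by
    intro t
    haveI := hprob t
    have habs : ∀ x, |r x - lam * u x| ≤ rmax + lam * C := by
      intro x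
      have h1 : |lam * u x| ≤ lam * C := by
        rw [abs_mul, abs_of_nonneg hlam0]
        exact mul_le_mul_of_nonneg_left (hC x) hlam0
      calc |r x - lam * u x| ≤ |r x| + |lam * u x| := abs_sub _ _
        _ ≤ rmax + lam * C := add_le_add (hrabs x) h1
    calc |∫ x, (r x - lam * u x) ∂(marginal η μ₀ t)|
        ≤ ∫ x, |r x - lam * u x| ∂(marginal η μ₀ t) := by
          simpa [Real.norm_eq_abs] using
            norm_integral_le_integral_norm (μ := marginal η μ₀ t)
              (fun x => r x - lam * u x)
      _ ≤ ∫ _, rmax + lam * C ∂(marginal η μ₀ t) :=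
          integral_mono
            (integrable_of_bound' _ (hr.sub (measurable_const.mul hum)).abs
              (rmax + lam * C) (fun x => by rw [abs_abs]; exact habs x))
            (integrable_const _) habs
      _ = rmax + lam * C := by simp
  have hsumm : Summable (fun t : ℕ => γ ^ t * ∫ x, (r x - lam * u x) ∂(marginal η μ₀ t)) := by
    refine Summable.of_norm_bounded (g := fun t => γ ^ t * (rmax + lam * C))
      (hgsum.mul_right _) ?_
    intro t
    rw [Real.norm_eq_abs, abs_mul, abs_of_nonneg (pow_nonneg hγ0 t)]
    exact mul_le_mul_of_nonneg_left (hIabs t) (pow_nonneg hγ0 t)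
  -- conclude
  refine Summable.tsum_le_of_sum_range_le hsumm ?_
  intro T
  calc (∑ t ∈ Finset.range T, γ ^ t * ∫ x, (r x - lam * u x) ∂(marginal η μ₀ t))
      ≤ ∑ t ∈ Finset.range T, (a t - a (t + 1)) :=
        Finset.sum_le_sum fun t _ => key t
    _ = a 0 - a T := Finset.sum_range_sub' a T
    _ ≤ a 0 := by linarith [haT T]
    _ = discJ κ γ r μ₀ := ha0
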